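/- arXiv:2403.18798 — 2 statements merged into one kernel-verified Lean document; each statement's English description precedes it below -/
import Mathlib

section
/- If limsup_α P_α(H(K₁) ∩ ⋯ ∩ H(Kₘ)) ≤ P(H(K₁) ∩ ⋯ ∩ H(Kₘ)) holds for every finite collection of non-empty compact sets K₁,…,Kₘ such that P(∂_F H(K_i)) = 0 for all i (boundary in the Fell topology), then it holds for all finite collections of non-empty compact sets, and hence P_α →_w P on (F, τ_uF). -/
open TopologicalSpace MeasureTheory Filter Set
open scoped ENNReal

/-- The hitting set `H(A)` of a subset `A ⊆ E`: all closed sets meeting `A`. -/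
def hitting {E : Type*} [TopologicalSpace E] (A : Set E) : Set (Closeds E) :=
  {F | ((F : Set E) ∩ A).Nonempty}

/-- The missing set `M(A)` of a subset `A ⊆ E`: all closed sets disjoint from `A`. -/
def missing {E : Type*} [TopologicalSpace E] (A : Set E) : Set (Closeds E) :=
  {F | (F : Set E) ∩ A = ∅}

/-- The upper Fell topology on the hyperspace of closed sets. -/
def upperFell (E : Type*) [TopologicalSpace E] : TopologicalSpace (Closeds E) :=
  generateFrom {U | ∃ K : Set E, IsCompact K ∧ U = missing K}

/-- The Fell topology on the hyperspace of closed sets. -/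
def fell (E : Type*) [TopologicalSpace E] : TopologicalSpace (Closeds E) :=
  generateFrom ({U | ∃ K : Set E, IsCompact K ∧ U = missing K} ∪
    {U | ∃ G : Set E, IsOpen G ∧ U = hitting G})

/-- The Borel σ-algebra of the Fell topology (it coincides with that of the
upper Fell topology). -/
def borelFell (E : Type*) [TopologicalSpace E] : MeasurableSpace (Closeds E) :=
  @borel (Closeds E) (fell E)

/-- Weak convergence of a net of (probability) measures with respect to a
topology `t` on the hyperspace: limsup over every `t`-closed set is dominated. -/
def WeakConvTo {E : Type*} [TopologicalSpace E] {ι : Type*} (l : Filter ι)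
    (t : TopologicalSpace (Closeds E))
    (P : ι → @Measure (Closeds E) (borelFell E))
    (Q : @Measure (Closeds E) (borelFell E)) : Prop :=
  ∀ C : Set (Closeds E), @IsClosed _ t C → l.limsup (fun i => P i C) ≤ Q C

open Topology Metric

section Aux

variable {E : Type*} [TopologicalSpace E]

lemma compl_missing (A : Set E) : (missing A)ᶜ = _root_.hitting A := by
  ext F; simp [missing, _root_.hitting, ← Set.nonempty_iff_ne_empty]

lemma hitting_mono {A B : Set E} (h : A ⊆ B) : _root_.hitting A ⊆ _root_.hitting B :=
  fun F hF => hF.mono (inter_subset_inter_right _ h)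

lemma hitting_empty : _root_.hitting (∅ : Set E) = ∅ := by
  ext F; simp [_root_.hitting]

lemma isOpen_fell_missing {K : Set E} (hK : IsCompact K) : IsOpen[fell E] (missing K) :=
  TopologicalSpace.GenerateOpen.basic _ (Or.inl ⟨K, hK, rfl⟩)

lemma isOpen_fell_hitting {G : Set E} (hG : IsOpen G) : IsOpen[fell E] (_root_.hitting G) :=
  TopologicalSpace.GenerateOpen.basic _ (Or.inr ⟨G, hG, rfl⟩)

lemma isClosed_fell_hitting {K : Set E} (hK : IsCompact K) : IsClosed[fell E] (_root_.hitting K) := by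
  rw [← compl_missing]
  exact @IsOpen.isClosed_compl _ (fell E) _ (isOpen_fell_missing hK)

lemma measurableSet_of_fell_open {U : Set (Closeds E)} (hU : IsOpen[fell E] U) :
    MeasurableSet[borelFell E] U :=
  MeasurableSpace.measurableSet_generateFrom hU

lemma measurableSet_hitting_compact {K : Set E} (hK : IsCompact K) :
    MeasurableSet[borelFell E] (_root_.hitting K) := by
  rw [← compl_missing]
  exact (measurableSet_of_fell_open (isOpen_fell_missing hK)).compl

lemma isOpen_upperFell_missing {K : Set E} (hK : IsCompact K) : IsOpen[upperFell E] (missing K) :=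
  TopologicalSpace.GenerateOpen.basic _ ⟨K, hK, rfl⟩

section Part1

lemma part1 {E : Type*} [TopologicalSpace E] [LocallyCompactSpace E]
    [SecondCountableTopology E] [T2Space E] {ι : Type*} (l : Filter ι) [l.NeBot]
    (P : ι → @Measure (Closeds E) (borelFell E)) (Q : @Measure (Closeds E) (borelFell E))
    (hP : ∀ i, IsProbabilityMeasure (P i)) (hQ : IsProbabilityMeasure Q)
    (h : ∀ (m : ℕ) (K : Fin m → Set E), (∀ i, IsCompact (K i)) → (∀ i, (K i).Nonempty) →
      (∀ i, Q (@frontier _ (fell E) (_root_.hitting (K i))) = 0) →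
      l.limsup (fun a => P a (⋂ j, _root_.hitting (K j))) ≤ Q (⋂ j, _root_.hitting (K j)))
    (m : ℕ) (K : Fin m → Set E) (hc : ∀ i, IsCompact (K i)) :
    l.limsup (fun a => P a (⋂ j, _root_.hitting (K j))) ≤ Q (⋂ j, _root_.hitting (K j)) := by
  -- dispose of the case of an empty K j
  by_cases hne : ∀ j, (K j).Nonempty
  swap
  · push_neg at hne
    obtain ⟨j, hj⟩ := hne
    have hE : (⋂ j, _root_.hitting (K j)) = ∅ := by
      apply subset_empty_iff.mp
      refine (iInter_subset _ j).trans ?_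
      rw [hj, hitting_empty]
    rw [hE]
    simp only [measure_empty]
    simpa using (zero_le _ : (0 : ℝ≥0∞) ≤ Q (∅ : Set (Closeds E)))
  rcases Nat.eq_zero_or_pos m with hm | hm
  · subst hm
    exact h 0 K (fun i => i.elim0) (fun i => i.elim0) (fun i => i.elim0)
  haveI : NeZero m := ⟨hm.ne'⟩
  letI : MetricSpace E := TopologicalSpace.metrizableSpaceMetric E
  -- radii for which cthickenings stay compact
  have hδ : ∀ j, ∃ δ : ℝ, 0 < δ ∧ IsCompact (cthickening δ (K j)) := fun j =>
    (hc j).exists_isCompact_cthickening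
  choose δ hδpos hδcomp using hδ
  set δ0 : ℝ := Finset.univ.inf' (Finset.univ_nonempty) δ with hδ0
  have hδ0pos : 0 < δ0 := by
    rw [hδ0]
    exact (Finset.lt_inf'_iff _).mpr (fun j _ => hδpos j)
  have hδ0le : ∀ j, δ0 ≤ δ j := fun j => Finset.inf'_le _ (Finset.mem_univ j)
  have hcomp : ∀ (s : ℝ) (j), 0 ≤ s → s ≤ δ0 → IsCompact (cthickening s (K j)) := by
    intro s j _ hs
    exact (hδcomp j).of_isClosed_subset isClosed_cthickening
      (cthickening_mono (hs.trans (hδ0le j)) _)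
  -- the countable bad set of radii
  set B : Set ℝ := ⋃ j, {r : ℝ | 0 < r ∧
    Q (_root_.hitting (cthickening r (K j))) ≠ Q (_root_.hitting (thickening r (K j)))} with hB
  have hBcount : B.Countable := by
    refine countable_iUnion (fun j => ?_)
    set Bj := {r : ℝ | 0 < r ∧
      Q (_root_.hitting (cthickening r (K j))) ≠ Q (_root_.hitting (thickening r (K j)))}
    have key : ∀ r ∈ Bj, (Q (_root_.hitting (thickening r (K j)))).toReal
        < (Q (_root_.hitting (cthickening r (K j)))).toReal := by
      rintro r ⟨-, hr⟩
      refine ENNReal.toReal_strict_mono (measure_ne_top Q _) ?_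
      exact lt_of_le_of_ne (measure_mono (hitting_mono (thickening_subset_cthickening _ _))) (Ne.symm hr)
    have mono : ∀ r ∈ Bj, ∀ r' ∈ Bj, r < r' →
        (Q (_root_.hitting (cthickening r (K j)))).toReal
        ≤ (Q (_root_.hitting (thickening r' (K j)))).toReal := by
      rintro r - r' ⟨hr', -⟩ hlt
      refine ENNReal.toReal_mono (measure_ne_top Q _)
        (measure_mono (hitting_mono (cthickening_subset_thickening' hr' hlt _)))
    rw [← Set.countable_coe_iff]
    have : ∀ r : Bj, ∃ q : ℚ, (Q (_root_.hitting (thickening (r : ℝ) (K j)))).toReal < q ∧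
        (q : ℝ) < (Q (_root_.hitting (cthickening (r : ℝ) (K j)))).toReal := fun r =>
      exists_rat_btwn (key r r.2)
    choose f hf1 hf2 using this
    have hinj : Function.Injective f := by
      intro r r' hrr'
      rcases lt_trichotomy (r : ℝ) (r' : ℝ) with hlt | heq | hlt
      · exfalso
        have := (hf2 r).trans_le (mono r r.2 r' r'.2 hlt)
        exact absurd (this.trans (hf1 r')) (by rw [hrr']; exact lt_irrefl _)
      · exact Subtype.ext heq
      · exfalso
        have := (hf2 r').trans_le (mono r' r'.2 r r.2 hlt)
        exact absurd (this.trans (hf1 r)) (by rw [hrr']; exact lt_irrefl _)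
    exact hinj.countable
  -- choose good radii tending to zero
  have hchoice : ∀ n : ℕ, ∃ r : ℝ, r ∈ Ioc 0 (min δ0 (1 / (n + 1))) ∧ r ∉ B := by
    intro n
    have hpos : 0 < min δ0 (1 / (n + 1) : ℝ) := lt_min hδ0pos (Nat.one_div_pos_of_nat)
    by_contra hcon
    push_neg at hcon
    have hsub : Ioc (0 : ℝ) (min δ0 (1 / (n + 1))) ⊆ B := fun r hr => hcon r hr
    have := measure_mono (μ := volume) hsub
    rw [hBcount.measure_zero volume, Real.volume_Ioc] at this
    simp only [sub_zero, nonpos_iff_eq_zero] at this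
    exact absurd this (ENNReal.ofReal_pos.mpr hpos).ne'
  choose r hr hrB using hchoice
  have hrpos : ∀ n, 0 < r n := fun n => (hr n).1
  have hrδ0 : ∀ n, r n ≤ δ0 := fun n => ((hr n).2).trans (min_le_left _ _)
  have hrsmall : ∀ n, r n ≤ 1 / (n + 1) := fun n => ((hr n).2).trans (min_le_right _ _)
  -- the approximating compact families
  set A : ℕ → Set (Closeds E) := fun n => ⋂ j, _root_.hitting (cthickening (r n) (K j)) with hA
  have hAcomp : ∀ n j, IsCompact (cthickening (r n) (K j)) := fun n j =>
    hcomp (r n) j (hrpos n).le (hrδ0 n)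
  have hAmeas : ∀ n, MeasurableSet[borelFell E] (A n) := fun n =>
    MeasurableSet.iInter (fun j => measurableSet_hitting_compact (hAcomp n j))
  -- limsup bound for each n
  have hbound : ∀ n, l.limsup (fun a => P a (⋂ j, _root_.hitting (K j))) ≤ Q (A n) := by
    intro n
    have hfr : ∀ j, Q (@frontier _ (fell E) (_root_.hitting (cthickening (r n) (K j)))) = 0 := by
      intro j
      have hBj : r n ∉ {s : ℝ | 0 < s ∧
          Q (_root_.hitting (cthickening s (K j))) ≠ Q (_root_.hitting (thickening s (K j)))} :=
        fun hmem => hrB n (mem_iUnion.mpr ⟨j, hmem⟩)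
      have heq : Q (_root_.hitting (cthickening (r n) (K j)))
          = Q (_root_.hitting (thickening (r n) (K j))) := by
        by_contra hne'
        exact hBj ⟨hrpos n, hne'⟩
      have hsub : @frontier _ (fell E) (_root_.hitting (cthickening (r n) (K j)))
          ⊆ _root_.hitting (cthickening (r n) (K j)) \ _root_.hitting (thickening (r n) (K j)) := by
        have h1 : @closure _ (fell E) (_root_.hitting (cthickening (r n) (K j)))
            = _root_.hitting (cthickening (r n) (K j)) :=
          @IsClosed.closure_eq _ (fell E) _ (isClosed_fell_hitting (hAcomp n j))
        have h2 : _root_.hitting (thickening (r n) (K j))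
            ⊆ @interior _ (fell E) (_root_.hitting (cthickening (r n) (K j))) := by
          refine @interior_maximal _ (fell E) _ _ ?_ ?_
          · exact hitting_mono (thickening_subset_cthickening _ _)
          · exact isOpen_fell_hitting isOpen_thickening
        intro x hx
        rw [show @frontier _ (fell E) (_root_.hitting (cthickening (r n) (K j)))
            = @closure _ (fell E) (_root_.hitting (cthickening (r n) (K j)))
              \ @interior _ (fell E) (_root_.hitting (cthickening (r n) (K j))) from rfl,
          h1] at hx
        exact diff_subset_diff_right h2 hx
      refine le_antisymm ?_ (zero_le)
      refine (measure_mono hsub).trans ?_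
      rw [measure_diff (hitting_mono (thickening_subset_cthickening _ _))
        (measurableSet_of_fell_open (isOpen_fell_hitting isOpen_thickening)).nullMeasurableSet
        (measure_ne_top Q _), heq, tsub_self]
    have := h m (fun j => cthickening (r n) (K j)) (hAcomp n)
      (fun j => (hne j).mono (self_subset_cthickening _)) hfr
    refine le_trans ?_ this
    refine limsup_le_limsup (Eventually.of_forall (fun a => ?_))
    exact measure_mono (iInter_mono (fun j => hitting_mono (self_subset_cthickening _)))
  -- directedness
  have hdir : Directed (· ⊇ ·) A := by
    intro a b
    obtain ⟨k, hk⟩ := exists_nat_one_div_lt (lt_min (hrpos a) (hrpos b))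
    refine ⟨k, ?_, ?_⟩ <;>
    · refine iInter_mono (fun j => hitting_mono (cthickening_mono ?_ _))
      have := (hrsmall k).trans hk.le
      simp only [le_min_iff] at this
      first
      | exact this.1
      | exact this.2
  -- intersection identification
  have hiInter : (⋂ n, A n) = ⋂ j, _root_.hitting (K j) := by
    apply Subset.antisymm
    · intro F hF
      refine mem_iInter.mpr (fun j => ?_)
      have hFn : ∀ n, ((F : Set E) ∩ cthickening (r n) (K j)).Nonempty := by
        intro n
        exact mem_iInter.mp (mem_iInter.mp hF n) j
      have hnon : (⋂ n, (F : Set E) ∩ cthickening (r n) (K j)).Nonempty := by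
        refine IsCompact.nonempty_iInter_of_directed_nonempty_isCompact_isClosed _ ?_ hFn
          (fun n => (hcomp (r n) j (hrpos n).le (hrδ0 n)).of_isClosed_subset
            (F.isClosed.inter isClosed_cthickening) inter_subset_right)
          (fun n => F.isClosed.inter isClosed_cthickening)
        intro a b
        obtain ⟨k, hk⟩ := exists_nat_one_div_lt (lt_min (hrpos a) (hrpos b))
        have := (hrsmall k).trans hk.le
        simp only [le_min_iff] at this
        exact ⟨k, inter_subset_inter_right _ (cthickening_mono this.1 _),
          inter_subset_inter_right _ (cthickening_mono this.2 _)⟩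
      obtain ⟨x, hx⟩ := hnon
      simp only [mem_iInter, mem_inter_iff] at hx
      refine ⟨x, (hx 0).1, ?_⟩
      have hxcl : x ∈ closure (K j) := by
        rw [closure_eq_iInter_cthickening]
        refine mem_iInter₂.mpr (fun ε hε => ?_)
        obtain ⟨k, hk⟩ := exists_nat_one_div_lt hε
        exact cthickening_mono ((hrsmall k).trans hk.le) _ (hx k).2
      rwa [(hc j).isClosed.closure_eq] at hxcl
    · exact subset_iInter (fun n =>
        iInter_mono (fun j => hitting_mono (self_subset_cthickening _)))
  calc l.limsup (fun a => P a (⋂ j, _root_.hitting (K j)))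
      ≤ ⨅ n, Q (A n) := le_iInf hbound
    _ = Q (⋂ n, A n) := (Directed.measure_iInter (fun n => (hAmeas n).nullMeasurableSet) hdir
        ⟨0, measure_ne_top Q _⟩).symm
    _ = Q (⋂ j, _root_.hitting (K j)) := by rw [hiInter]

end Part1

lemma missing_anti {A B : Set E} (h : A ⊆ B) : missing B ⊆ missing A := by
  intro F hF
  simp only [missing, mem_setOf_eq] at hF ⊢
  exact subset_empty_iff.mp ((inter_subset_inter_right _ h).trans hF.subset)

lemma missing_empty : missing (∅ : Set E) = univ := by
  ext F; simp [missing]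

lemma missing_union (A B : Set E) : missing (A ∪ B) = missing A ∩ missing B := by
  ext F; simp only [missing, mem_setOf_eq, mem_inter_iff, inter_union_distrib_left,
    union_empty_iff]

/-- The countable family of "good" compact sets built from a countable basis. -/
def goodCompacts (E : Type*) [TopologicalSpace E] [SecondCountableTopology E] : Set (Set E) :=
  {A | ∃ s : Set (Set E), s.Finite ∧ s ⊆ countableBasis E ∧
    (∀ U ∈ s, IsCompact (closure U)) ∧ A = closure (⋃₀ s)}

variable [SecondCountableTopology E]

lemma goodCompacts_countable : (goodCompacts E).Countable := by
  have : goodCompacts E ⊆ (fun s : Set (Set E) => closure (⋃₀ s)) ''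
      {s | s.Finite ∧ s ⊆ countableBasis E} := by
    rintro A ⟨s, hfin, hsub, -, rfl⟩
    exact ⟨s, ⟨hfin, hsub⟩, rfl⟩
  exact ((countable_setOf_finite_subset (countable_countableBasis E)).image _).mono this

lemma goodCompacts_isCompact {A : Set E} (hA : A ∈ goodCompacts E) : IsCompact A := by
  obtain ⟨s, hfin, -, hcomp, rfl⟩ := hA
  rw [hfin.closure_sUnion]
  exact hfin.isCompact_biUnion hcomp

lemma goodCompacts_empty : (∅ : Set E) ∈ goodCompacts E :=
  ⟨∅, finite_empty, empty_subset _, fun U hU => hU.elim, by simp⟩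

lemma goodCompacts_union {A B : Set E} (hA : A ∈ goodCompacts E) (hB : B ∈ goodCompacts E) :
    A ∪ B ∈ goodCompacts E := by
  obtain ⟨s, hsfin, hssub, hscomp, rfl⟩ := hA
  obtain ⟨t, htfin, htsub, htcomp, rfl⟩ := hB
  refine ⟨s ∪ t, hsfin.union htfin, union_subset hssub htsub, ?_, ?_⟩
  · rintro U (hU | hU)
    exacts [hscomp U hU, htcomp U hU]
  · rw [sUnion_union, closure_union]

lemma goodCompacts_separate [LocallyCompactSpace E] [T2Space E] {K F : Set E}
    (hK : IsCompact K) (hF : IsClosed F) (hdisj : F ∩ K = ∅) :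
    ∃ L ∈ goodCompacts E, K ⊆ L ∧ F ∩ L = ∅ := by
  have hstep : ∀ x ∈ K, ∃ U, U ∈ countableBasis E ∧ x ∈ U ∧ IsCompact (closure U) ∧
      closure U ⊆ Fᶜ := by
    intro x hx
    have hxF : x ∈ Fᶜ := fun hxF => by
      have : x ∈ F ∩ K := ⟨hxF, hx⟩
      rw [hdisj] at this
      exact this
    obtain ⟨M, hMnhds, hMsub, hMcomp⟩ := local_compact_nhds (hF.isOpen_compl.mem_nhds hxF)
    obtain ⟨U, hUbasis, hxU, hUsub⟩ := (isBasis_countableBasis E).exists_subset_of_mem_open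
      (mem_interior_iff_mem_nhds.mpr hMnhds) isOpen_interior
    have hclM : closure U ⊆ M :=
      (closure_mono hUsub).trans (closure_minimal interior_subset hMcomp.isClosed)
    exact ⟨U, hUbasis, hxU, hMcomp.of_isClosed_subset isClosed_closure hclM,
      hclM.trans hMsub⟩
  choose! U hU1 hU2 hU3 hU4 using hstep
  have hcover : K ⊆ ⋃ x : K, U x := fun x hx =>
    mem_iUnion.mpr ⟨⟨x, hx⟩, hU2 x hx⟩
  obtain ⟨t, ht⟩ := hK.elim_finite_subcover (fun x : K => U x)
    (fun x => (isBasis_countableBasis E).isOpen (hU1 x x.2)) hcover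
  set s : Set (Set E) := (fun x : K => U x) '' (t : Set K) with hs
  have hsfin : s.Finite := (t.finite_toSet).image _
  refine ⟨closure (⋃₀ s), ⟨s, hsfin, ?_, ?_, rfl⟩, ?_, ?_⟩
  · rintro V ⟨x, -, rfl⟩
    exact hU1 x x.2
  · rintro V ⟨x, -, rfl⟩
    exact hU3 x x.2
  · refine subset_trans ht ?_
    refine subset_trans ?_ subset_closure
    intro y hy
    obtain ⟨x, hxt, hxy⟩ := mem_iUnion₂.mp hy
    exact ⟨U x, ⟨x, hxt, rfl⟩, hxy⟩
  · rw [inter_comm, hsfin.closure_sUnion]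
    apply subset_empty_iff.mp
    rintro y ⟨hy1, hy2⟩
    obtain ⟨V, hVs, hyV⟩ := mem_iUnion₂.mp hy1
    obtain ⟨x, hxt, rfl⟩ := hVs
    exact hU4 x x.2 hyV hy2


section Part2

lemma upperFell_decomp {E : Type*} [TopologicalSpace E] [LocallyCompactSpace E]
    [SecondCountableTopology E] [T2Space E] {U : Set (Closeds E)}
    (hU : IsOpen[upperFell E] U) :
    ∀ F ∈ U, ∃ L ∈ goodCompacts E, F ∈ missing L ∧ missing L ⊆ U := by
  have hU' : TopologicalSpace.GenerateOpen
      {V | ∃ K : Set E, IsCompact K ∧ V = missing K} U := hU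
  clear hU
  induction hU' with
  | basic u hu =>
    obtain ⟨K, hK, rfl⟩ := hu
    intro F hF
    obtain ⟨L, hL, hKL, hFL⟩ := goodCompacts_separate hK F.isClosed hF
    exact ⟨L, hL, hFL, missing_anti hKL⟩
  | univ =>
    intro F _
    exact ⟨∅, goodCompacts_empty, by simp [missing_empty], by simp⟩
  | inter u v hu hv ihu ihv =>
    intro F hF
    obtain ⟨L₁, hL₁, hFL₁, hsub₁⟩ := ihu F hF.1
    obtain ⟨L₂, hL₂, hFL₂, hsub₂⟩ := ihv F hF.2
    refine ⟨L₁ ∪ L₂, goodCompacts_union hL₁ hL₂, ?_, ?_⟩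
    · rw [missing_union]; exact ⟨hFL₁, hFL₂⟩
    · rw [missing_union]; exact inter_subset_inter hsub₁ hsub₂
  | sUnion S hS ih =>
    intro F hF
    obtain ⟨u, huS, hFu⟩ := hF
    obtain ⟨L, hL, hFL, hsub⟩ := ih u huS F hFu
    exact ⟨L, hL, hFL, hsub.trans (subset_sUnion_of_mem huS)⟩

lemma part2 {E : Type*} [TopologicalSpace E] [LocallyCompactSpace E]
    [SecondCountableTopology E] [T2Space E] {ι : Type*} (l : Filter ι) [l.NeBot]
    (P : ι → @Measure (Closeds E) (borelFell E)) (Q : @Measure (Closeds E) (borelFell E))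
    (hP : ∀ i, IsProbabilityMeasure (P i)) (hQ : IsProbabilityMeasure Q)
    (h1 : ∀ (m : ℕ) (K : Fin m → Set E), (∀ i, IsCompact (K i)) →
      l.limsup (fun a => P a (⋂ j, _root_.hitting (K j))) ≤ Q (⋂ j, _root_.hitting (K j))) :
    WeakConvTo l (upperFell E) P Q := by
  intro C hC
  have hop : IsOpen[upperFell E] Cᶜ := by
    exact @IsClosed.isOpen_compl _ (upperFell E) C hC
  set T : Set (Set E) := {L | L ∈ goodCompacts E ∧ missing L ⊆ Cᶜ} with hTdef
  have hTc : T.Countable := goodCompacts_countable.mono (fun L hL => hL.1)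
  have hdecomp : Cᶜ = ⋃ L ∈ T, missing L := by
    apply Subset.antisymm
    · intro F hF
      obtain ⟨L, hL, hFL, hsub⟩ := upperFell_decomp hop F hF
      exact mem_iUnion₂.mpr ⟨L, ⟨hL, hsub⟩, hFL⟩
    · exact iUnion₂_subset fun L hL => hL.2
  have hC' : C = ⋂ L ∈ T, _root_.hitting L := by
    have hcc := congrArg compl hdecomp
    rw [compl_compl, compl_iUnion₂] at hcc
    simp_rw [compl_missing] at hcc
    exact hcc
  rcases T.eq_empty_or_nonempty with hT | hT
  · rw [hC', hT]
    simp only [mem_empty_iff_false, iInter_of_empty, iInter_univ]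
    simp only [measure_univ]
    rw [limsup_const]
  · obtain ⟨g, hg⟩ := hTc.exists_eq_range hT
    have hgT : ∀ n, g n ∈ T := fun n => hg ▸ mem_range_self n
    have hgcomp : ∀ n, IsCompact (g n) := fun n => goodCompacts_isCompact (hgT n).1
    have hC'' : C = ⋂ n, _root_.hitting (g n) := by
      rw [hC', hg, biInter_range]
    set D : ℕ → Set (Closeds E) := fun N => ⋂ j : Fin (N + 1), _root_.hitting (g j) with hD
    have hCD : ∀ N, C ⊆ D N := by
      intro N
      rw [hC'']
      exact subset_iInter fun j => iInter_subset _ (j : ℕ)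
    have hbound : ∀ N, l.limsup (fun a => P a C) ≤ Q (D N) := fun N =>
      (limsup_le_limsup (Eventually.of_forall fun a => measure_mono (hCD N))).trans
        (h1 (N + 1) (fun j => g j) (fun j => hgcomp j))
    have hDmeas : ∀ N, MeasurableSet[borelFell E] (D N) := fun N =>
      MeasurableSet.iInter fun j => measurableSet_hitting_compact (hgcomp j)
    have hDanti : Antitone D := by
      intro a b hab
      intro x hx
      refine mem_iInter.mpr fun j => ?_
      have : ((j : ℕ) : ℕ) < b + 1 := lt_of_lt_of_le j.2 (by omega)
      exact mem_iInter.mp hx ⟨(j : ℕ), this⟩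
    have hID : (⋂ N, D N) = C := by
      rw [hC'']
      apply Subset.antisymm
      · intro x hx
        refine mem_iInter.mpr fun n => ?_
        have := mem_iInter.mp (mem_iInter.mp hx n) ⟨n, n.lt_succ_self⟩
        simpa using this
      · intro x hx
        refine mem_iInter.mpr fun N => mem_iInter.mpr fun j => ?_
        exact mem_iInter.mp hx (j : ℕ)
    calc l.limsup (fun a => P a C) ≤ ⨅ N, Q (D N) := le_iInf hbound
      _ = Q (⋂ N, D N) := (Directed.measure_iInter
          (fun N => (hDmeas N).nullMeasurableSet) hDanti.directed_ge
          ⟨0, measure_ne_top Q _⟩).symm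
      _ = Q C := by rw [hID]

end Part2


end Aux

/-- if the limsup inequality over finite intersections of hitting
sets holds whenever all the compact sets have `Q`-null Fell-boundary of their
hitting sets, then it holds for all finite collections of non-empty compact
sets, and hence `P_α →_w Q` on `(F, τ_uF)`. -/
theorem stmt_4 {E : Type*} [TopologicalSpace E] [LocallyCompactSpace E]
    [SecondCountableTopology E] [T2Space E] {ι : Type*} (l : Filter ι) [l.NeBot]
    (P : ι → @Measure (Closeds E) (borelFell E)) (Q : @Measure (Closeds E) (borelFell E))
    (hP : ∀ i, IsProbabilityMeasure (P i)) (hQ : IsProbabilityMeasure Q)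
    (h : ∀ (m : ℕ) (K : Fin m → Set E), (∀ i, IsCompact (K i)) → (∀ i, (K i).Nonempty) →
      (∀ i, Q (@frontier _ (fell E) (hitting (K i))) = 0) →
      l.limsup (fun a => P a (⋂ j, hitting (K j))) ≤ Q (⋂ j, hitting (K j))) :
    (∀ (m : ℕ) (K : Fin m → Set E), (∀ i, IsCompact (K i)) → (∀ i, (K i).Nonempty) →
      l.limsup (fun a => P a (⋂ j, hitting (K j))) ≤ Q (⋂ j, hitting (K j))) ∧
    WeakConvTo l (upperFell E) P Q := by
  have h1 : ∀ (m : ℕ) (K : Fin m → Set E), (∀ i, IsCompact (K i)) →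
      l.limsup (fun a => P a (⋂ j, _root_.hitting (K j))) ≤ Q (⋂ j, _root_.hitting (K j)) :=
    part1 l P Q hP hQ h
  exact ⟨fun m K hc _ => h1 m K hc, part2 l P Q hP hQ h1⟩
end

section
/- Let ξ_α be random variables in E with (i) C_α →_D C in (F, τ_uF), (ii) limsup_α P_α(ξ_α ∉ C_α) = 0, and (iii) asymptotic tightness: for every ε > 0 there is a compact K with liminf_α P_α(ξ_α ∈ K) ≥ 1 − ε. Then limsup_α P_α(ξ_α ∈ F) ≤ T_C(F) for all closed F ⊆ E, where T_C(B) = P(C ∩ B ≠ ∅) is the capacity functional of C. If in addition C ⊆ {ξ} almost surely for some random variable ξ in E, then ξ_α converges in distribution to ξ in (E, G). -/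
open TopologicalSpace MeasureTheory Filter Set
open scoped ENNReal

lemma my_limsup_add_le {ι : Type*} {l : Filter ι} (u v : ι → ℝ≥0∞) :
    l.limsup (fun i => u i + v i) ≤ l.limsup u + l.limsup v := by
  rcases eq_top_or_lt_top (l.limsup u + l.limsup v) with h | h
  · simp [h]
  refine ENNReal.le_of_forall_pos_le_add fun ε hε _ => ?_
  have hu : l.limsup u ≠ ⊤ := (lt_of_le_of_lt le_self_add h).ne
  have hv : l.limsup v ≠ ⊤ := (lt_of_le_of_lt le_add_self h).ne
  have hε2 : (ε : ℝ≥0∞) / 2 ≠ 0 := by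
    simp [ENNReal.div_eq_zero_iff, hε.ne']
  have hu' : l.limsup u < l.limsup u + ε / 2 := ENNReal.lt_add_right hu hε2
  have hv' : l.limsup v < l.limsup v + ε / 2 := ENNReal.lt_add_right hv hε2
  have h1 := Filter.eventually_lt_of_limsup_lt hu'
  have h2 := Filter.eventually_lt_of_limsup_lt hv'
  refine Filter.limsup_le_of_le (by isBoundedDefault) ?_
  filter_upwards [h1, h2] with i h1 h2
  calc u i + v i ≤ (l.limsup u + ε / 2) + (l.limsup v + ε / 2) :=
        add_le_add h1.le h2.le
    _ = l.limsup u + l.limsup v + ε := by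
        rw [add_add_add_comm, ENNReal.add_halves]

/-- if `C_α →_D C` in `(F, τ_uF)`, `limsup_α P_α(ξ_α ∉ C_α) = 0`
and `(ξ_α)` is asymptotically tight, then `limsup_α P_α(ξ_α ∈ F) ≤ T_C(F)` for
all closed `F`; if moreover `C ⊆ {ξ}` a.s. for a random variable `ξ`, then
`ξ_α →_D ξ` in `E`. -/
theorem stmt_9 {E : Type*} [TopologicalSpace E] [LocallyCompactSpace E]
    [SecondCountableTopology E] [T2Space E] [MeasurableSpace E] [BorelSpace E]
    {ι : Type*} (l : Filter ι) [l.NeBot]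
    (Ω : ι → Type*) (mΩ : ∀ i, MeasurableSpace (Ω i))
    (μ : ∀ i, @Measure (Ω i) (mΩ i)) (hμ : ∀ i, IsProbabilityMeasure (μ i))
    {Ω₀ : Type*} (mΩ₀ : MeasurableSpace Ω₀) (μ₀ : @Measure Ω₀ mΩ₀)
    (hμ₀ : IsProbabilityMeasure μ₀)
    (C : ∀ i, Ω i → Closeds E) (C₀ : Ω₀ → Closeds E)
    (hC : ∀ i, @Measurable _ _ (mΩ i) (borelFell E) (C i))
    (hC₀ : @Measurable _ _ mΩ₀ (borelFell E) C₀)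
    (ξ : ∀ i, Ω i → E) (hξ : ∀ i, @Measurable _ _ (mΩ i) _ (ξ i))
    (hconv : WeakConvTo l (upperFell E)
      (fun i => @Measure.map _ _ (mΩ i) (borelFell E) (C i) (μ i))
      (@Measure.map _ _ mΩ₀ (borelFell E) C₀ μ₀))
    (hmem : l.limsup (fun i => μ i {ω | ξ i ω ∉ (C i ω : Set E)}) = 0)
    (htight : ∀ ε : ℝ≥0∞, 0 < ε → ∃ K : Set E, IsCompact K ∧
      1 - ε ≤ l.liminf (fun i => μ i {ω | ξ i ω ∈ K})) :
    (∀ F : Set E, IsClosed F →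
      l.limsup (fun i => μ i {ω | ξ i ω ∈ F}) ≤
        μ₀ {ω | ((C₀ ω : Set E) ∩ F).Nonempty}) ∧
    (∀ ξ₀ : Ω₀ → E, @Measurable _ _ mΩ₀ _ ξ₀ →
      (∀ᵐ ω ∂μ₀, (C₀ ω : Set E) ⊆ {ξ₀ ω}) →
      ∀ F : Set E, IsClosed F →
        l.limsup (fun i => μ i {ω | ξ i ω ∈ F}) ≤ μ₀ {ω | ξ₀ ω ∈ F}) := by
  have key : ∀ F : Set E, IsClosed F →
      l.limsup (fun i => μ i {ω | ξ i ω ∈ F}) ≤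
        μ₀ {ω | ((C₀ ω : Set E) ∩ F).Nonempty} := by
    intro F hF
    refine ENNReal.le_of_forall_pos_le_add fun ε hε _ => ?_
    obtain ⟨K, hK, hKt⟩ := htight (ε : ℝ≥0∞) (by exact_mod_cast hε)
    set A : Set E := F ∩ K with hA
    have hAcomp : IsCompact A := hK.inter_left hF
    have hopenF : @IsOpen _ (fell E) (missing A) :=
      TopologicalSpace.isOpen_generateFrom_of_mem (Or.inl ⟨A, hAcomp, rfl⟩)
    have hopenU : @IsOpen _ (upperFell E) (missing A) :=
      TopologicalSpace.isOpen_generateFrom_of_mem ⟨A, hAcomp, rfl⟩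
    have hcompl : (_root_.hitting A)ᶜ = missing A := by
      ext G
      simp [_root_.hitting, missing, Set.not_nonempty_iff_eq_empty]
    have hclosed : @IsClosed _ (upperFell E) (_root_.hitting A) := by
      letI := upperFell E
      exact ⟨by rw [hcompl]; exact hopenU⟩
    have hmeas : MeasurableSet[borelFell E] (_root_.hitting A) := by
      have : MeasurableSet[borelFell E] (missing A) :=
        MeasurableSpace.measurableSet_generateFrom hopenF
      have := this.compl
      rwa [← hcompl, compl_compl] at this
    have hconvA := hconv (_root_.hitting A) hclosed
    have hmap : ∀ i, @Measure.map _ _ (mΩ i) (borelFell E) (C i) (μ i) (_root_.hitting A)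
        = μ i ((C i) ⁻¹' _root_.hitting A) := fun i => by
      letI := mΩ i; letI := borelFell E
      exact Measure.map_apply (hC i) hmeas
    have hmap₀ : @Measure.map _ _ mΩ₀ (borelFell E) C₀ μ₀ (_root_.hitting A)
        = μ₀ (C₀ ⁻¹' _root_.hitting A) := by
      letI := mΩ₀; letI := borelFell E
      exact Measure.map_apply hC₀ hmeas
    simp only [hmap, hmap₀] at hconvA
    -- pointwise bound
    have hpt : ∀ i, μ i {ω | ξ i ω ∈ F} ≤
        μ i ((C i) ⁻¹' _root_.hitting A) +
          (μ i {ω | ξ i ω ∉ (C i ω : Set E)} + μ i {ω | ξ i ω ∉ K}) := by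
      intro i
      letI := mΩ i
      have hsub : {ω | ξ i ω ∈ F} ⊆
          (C i) ⁻¹' _root_.hitting A ∪
            ({ω | ξ i ω ∉ (C i ω : Set E)} ∪ {ω | ξ i ω ∉ K}) := by
        intro ω hω
        by_cases hKm : ξ i ω ∈ K
        · by_cases hCm : ξ i ω ∈ (C i ω : Set E)
          · exact Or.inl ⟨ξ i ω, hCm, hω, hKm⟩
          · exact Or.inr (Or.inl hCm)
        · exact Or.inr (Or.inr hKm)
      calc μ i {ω | ξ i ω ∈ F} ≤ μ i ((C i) ⁻¹' _root_.hitting A ∪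
            ({ω | ξ i ω ∉ (C i ω : Set E)} ∪ {ω | ξ i ω ∉ K})) := measure_mono hsub
        _ ≤ μ i ((C i) ⁻¹' _root_.hitting A) +
            μ i ({ω | ξ i ω ∉ (C i ω : Set E)} ∪ {ω | ξ i ω ∉ K}) := measure_union_le _ _
        _ ≤ μ i ((C i) ⁻¹' _root_.hitting A) +
            (μ i {ω | ξ i ω ∉ (C i ω : Set E)} + μ i {ω | ξ i ω ∉ K}) :=
          add_le_add_right (measure_union_le _ _) _
    -- limsup of the K-escape term
    have hKesc : l.limsup (fun i => μ i {ω | ξ i ω ∉ K}) ≤ (ε : ℝ≥0∞) := by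
      have heq : ∀ i, μ i {ω | ξ i ω ∉ K} = 1 - μ i {ω | ξ i ω ∈ K} := by
        intro i
        letI := mΩ i
        haveI := hμ i
        have h1 : {ω | ξ i ω ∉ K} = (ξ i ⁻¹' K)ᶜ := rfl
        rw [h1, prob_compl_eq_one_sub ((hξ i) hK.isClosed.measurableSet)]
        rfl
      calc l.limsup (fun i => μ i {ω | ξ i ω ∉ K})
          = l.limsup (fun i => 1 - μ i {ω | ξ i ω ∈ K}) := by
            simp only [heq]
        _ = 1 - l.liminf (fun i => μ i {ω | ξ i ω ∈ K}) :=
            ENNReal.limsup_const_sub l _ ENNReal.one_ne_top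
        _ ≤ 1 - (1 - (ε : ℝ≥0∞)) := tsub_le_tsub_left hKt 1
        _ ≤ (ε : ℝ≥0∞) := tsub_tsub_le
    calc l.limsup (fun i => μ i {ω | ξ i ω ∈ F})
        ≤ l.limsup (fun i => μ i ((C i) ⁻¹' _root_.hitting A) +
            (μ i {ω | ξ i ω ∉ (C i ω : Set E)} + μ i {ω | ξ i ω ∉ K})) :=
          Filter.limsup_le_limsup (Filter.Eventually.of_forall hpt)
      _ ≤ l.limsup (fun i => μ i ((C i) ⁻¹' _root_.hitting A)) +
            l.limsup (fun i => μ i {ω | ξ i ω ∉ (C i ω : Set E)} +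
              μ i {ω | ξ i ω ∉ K}) := my_limsup_add_le _ _
      _ ≤ l.limsup (fun i => μ i ((C i) ⁻¹' _root_.hitting A)) +
            (l.limsup (fun i => μ i {ω | ξ i ω ∉ (C i ω : Set E)}) +
              l.limsup (fun i => μ i {ω | ξ i ω ∉ K})) :=
          add_le_add_right (my_limsup_add_le _ _) _
      _ ≤ μ₀ (C₀ ⁻¹' _root_.hitting A) + (0 + (ε : ℝ≥0∞)) :=
          add_le_add hconvA (add_le_add hmem.le hKesc)
      _ ≤ μ₀ {ω | ((C₀ ω : Set E) ∩ F).Nonempty} + (ε : ℝ≥0∞) := by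
          rw [zero_add]
          refine add_le_add_left ?_ _
          letI := mΩ₀
          refine measure_mono fun ω hω => ?_
          obtain ⟨x, hx1, hx2, _⟩ := hω
          exact ⟨x, hx1, hx2⟩
  refine ⟨key, fun ξ₀ hξ₀ hae F hF => ?_⟩
  refine (key F hF).trans ?_
  letI := mΩ₀
  refine measure_mono_ae ?_
  filter_upwards [hae] with ω hω
  intro h
  obtain ⟨x, hx1, hx2⟩ := h
  have hx := hω hx1
  rw [Set.mem_singleton_iff] at hx
  subst hx
  exact hx2
end
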